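/- arXiv:1705.02584 — 9 statements merged into one kernel-verified Lean document; each statement's English description precedes it below -/
import Mathlib

section
/- Let A be a sum-free set of positive integers and m an element of A. Then for all natural numbers u ≤ v, |A ∩ ([u,v] ∪ [u+m, v+m])| ≤ v - u + 1. -/
theorem sumfree_two_intervals (A : Finset ℤ) (hpos : ∀ a ∈ A, 0 < a)
    (hsf : ∀ x ∈ A, ∀ y ∈ A, ∀ z ∈ A, x + y ≠ z)
    (m : ℤ) (hm : m ∈ A) (u v : ℤ) (huv : u ≤ v) :
    ((A ∩ (Finset.Icc u v ∪ Finset.Icc (u + m) (v + m))).card : ℤ) ≤ v - u + 1 := by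
  have hm0 : 0 < m := hpos m hm
  have hcard : (A ∩ (Finset.Icc u v ∪ Finset.Icc (u + m) (v + m))).card
      ≤ (Finset.Icc u v).card := by
    apply Finset.card_le_card_of_injOn (fun x => if x ∈ Finset.Icc u v then x else x - m)
    · intro x hx
      simp only [Finset.mem_coe, Finset.mem_inter, Finset.mem_union] at hx ⊢
      split_ifs with h
      · exact h
      · rcases hx.2 with h1 | h2
        · exact absurd h1 h
        · simp only [Finset.mem_coe, Finset.mem_Icc] at h2 ⊢
          omega
    · intro x hx y hy hxy
      simp only [Finset.mem_coe, Finset.mem_inter, Finset.mem_union] at hx hy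
      by_cases h1 : x ∈ Finset.Icc u v <;> by_cases h2 : y ∈ Finset.Icc u v <;>
        simp only [h1, h2, if_true, if_false, if_pos, if_neg, not_false_iff] at hxy
      · exact hxy
      · exact absurd (by omega : x + m = y) (hsf x hx.1 m hm y hy.1)
      · exact absurd (by omega : y + m = x) (hsf y hy.1 m hm x hx.1)
      · omega
  have h2 : (Finset.Icc u v).card = (v + 1 - u).toNat := Int.card_Icc u v
  omega
end

section
/- Let A be a sum-free set of positive integers and m an element of A. Then for every natural number u, |A ∩ [u, u+2m-1]| ≤ m. -/
theorem sumfree_interval_2m (A : Finset ℤ) (hpos : ∀ a ∈ A, 0 < a)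
    (hsf : ∀ x ∈ A, ∀ y ∈ A, ∀ z ∈ A, x + y ≠ z)
    (m : ℤ) (hm : m ∈ A) (u : ℤ) :
    ((A ∩ Finset.Icc u (u + 2 * m - 1)).card : ℤ) ≤ m := by
  have hm0 : 0 < m := hpos m hm
  have key : (A ∩ Finset.Icc u (u + 2 * m - 1)).card ≤ (Finset.Icc u (u + m - 1)).card := by
    apply Finset.card_le_card_of_injOn (fun x => if x < u + m then x else x - m)
    · intro x hx
      simp only [Finset.coe_inter, Set.mem_inter_iff, Finset.mem_coe, Finset.mem_inter, Finset.mem_Icc] at hx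
      simp only [Finset.mem_coe, Finset.mem_Icc]
      split <;> omega
    · intro x hx y hy hxy
      simp only [Finset.coe_inter, Set.mem_inter_iff, Finset.mem_coe, Finset.mem_Icc] at hx hy
      by_contra hne
      rcases lt_or_ge x (u+m) with h1 | h1 <;> rcases lt_or_ge y (u+m) with h2 | h2 <;>
        simp only [h1, h2, if_pos, if_neg, not_lt, ge_iff_le, if_true, if_false] at hxy
      · exact hne hxy
      · exact hsf x hx.1 m hm y hy.1 (by omega)
      · exact hsf y hy.1 m hm x hx.1 (by omega)
      · omega
  have hc : (Finset.Icc u (u + m - 1)).card = (u + m - 1 + 1 - u).toNat := Int.card_Icc _ _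
  omega
end

section
/- Let A be a sum-free set of positive integers and m an element of A. Then for all natural numbers u ≤ v, |A ∩ [u,v]| ≤ (v - u + m + 1)/2. -/
theorem sumfree_interval_half (A : Finset ℤ) (hpos : ∀ a ∈ A, 0 < a)
    (hsf : ∀ x ∈ A, ∀ y ∈ A, ∀ z ∈ A, x + y ≠ z)
    (m : ℤ) (hm : m ∈ A) (u v : ℤ) (huv : u ≤ v) :
    2 * ((A ∩ Finset.Icc u v).card : ℤ) ≤ v - u + m + 1 := by
  have hmpos : 0 < m := hpos m hm
  set B := A ∩ Finset.Icc u v with hB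
  set C := B.image (· + m) with hC
  have hcard : C.card = B.card := Finset.card_image_of_injective _ (add_left_injective m)
  have hdisj : Disjoint B C := by
    rw [Finset.disjoint_right]
    intro x hxC hxB
    obtain ⟨b, hb, rfl⟩ := Finset.mem_image.mp hxC
    have hbA : b ∈ A := (Finset.mem_inter.mp hb).1
    have hxA : b + m ∈ A := (Finset.mem_inter.mp hxB).1
    exact hsf b hbA m hm (b + m) hxA rfl
  have hsub : B ∪ C ⊆ Finset.Icc u (v + m) := by
    intro x hx
    rcases Finset.mem_union.mp hx with h | h
    · have := (Finset.mem_inter.mp h).2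
      rw [Finset.mem_Icc] at this ⊢
      omega
    · obtain ⟨b, hb, rfl⟩ := Finset.mem_image.mp h
      have := (Finset.mem_inter.mp hb).2
      rw [Finset.mem_Icc] at this ⊢
      omega
  have h1 : B.card + C.card ≤ (Finset.Icc u (v + m)).card :=
    (Finset.card_union_of_disjoint hdisj) ▸ Finset.card_le_card hsub
  rw [hcard, Int.card_Icc] at h1
  have h2 : ((v + m + 1 - u).toNat : ℤ) = v + m + 1 - u := Int.toNat_of_nonneg (by omega)
  omega
end

section
/- For every finite set A of integers, the difference set A - A contains all integers in the interval [1, 2|A| - ℓ(A) - 1], where ℓ(A) = max(A) - min(A) + 1 (interpreting the interval as empty when 2|A| - ℓ(A) - 1 < 1). -/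
open Pointwise

theorem diff_set_contains_interval (A : Finset ℤ) (hA : A.Nonempty) :
    ∀ x : ℤ, 1 ≤ x → x ≤ 2 * (A.card : ℤ) - (A.max' hA - A.min' hA + 1) - 1 →
      x ∈ A - A := by
  intro x hx1 hx2
  set m := A.min' hA
  set M := A.max' hA
  set B := A.image (· + x) with hB
  have hBcard : B.card = A.card := Finset.card_image_of_injective _ (add_left_injective x)
  -- both A and B are subsets of Icc m (M + x)
  have hAsub : A ⊆ Finset.Icc m (M + x) := by
    intro a ha
    simp only [Finset.mem_Icc]
    exact ⟨A.min'_le a ha, le_trans (A.le_max' a ha) (by linarith)⟩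
  have hBsub : B ⊆ Finset.Icc m (M + x) := by
    intro b hb
    simp only [hB, Finset.mem_image] at hb
    obtain ⟨a, ha, rfl⟩ := hb
    simp only [Finset.mem_Icc]
    exact ⟨by linarith [A.min'_le a ha], by linarith [A.le_max' a ha]⟩
  -- A and B intersect
  have hnd : ¬ Disjoint A B := by
    intro hdisj
    have hunion : (A ∪ B).card = A.card + B.card := Finset.card_union_of_disjoint hdisj
    have hsub : A ∪ B ⊆ Finset.Icc m (M + x) := Finset.union_subset hAsub hBsub
    have hle : (A ∪ B).card ≤ (Finset.Icc m (M + x)).card := Finset.card_le_card hsub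
    rw [Int.card_Icc] at hle
    have h1 : (M + x + 1 - m).toNat = M + x + 1 - m := by
      rw [Int.toNat_of_nonneg]
      have := A.min'_le _ (A.max'_mem hA)
      linarith
    have h2 : ((A ∪ B).card : ℤ) ≤ M + x + 1 - m := by
      rw [← h1]; exact_mod_cast hle
    rw [hunion, hBcard] at h2
    push_cast at h2
    linarith
  rw [Finset.not_disjoint_iff] at hnd
  obtain ⟨a, haA, haB⟩ := hnd
  simp only [hB, Finset.mem_image] at haB
  obtain ⟨b, hbA, hba⟩ := haB
  rw [Finset.mem_sub]
  exact ⟨a, haA, b, hbA, by linarith⟩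
end

section
/- Let A be a finite set of integers contained in [0, k] for some positive integer k. Then the sumset A + A contains every integer x with 2k - 2|A| + 2 ≤ x ≤ 2|A| - 2. -/
open Pointwise

theorem sumset_contains_interval (k : ℤ) (hk : 0 < k) (A : Finset ℤ)
    (hA : A ⊆ Finset.Icc 0 k) :
    ∀ x : ℤ, 2 * k - 2 * (A.card : ℤ) + 2 ≤ x → x ≤ 2 * (A.card : ℤ) - 2 →
      x ∈ A + A := by
  intro x hx1 hx2
  set B : Finset ℤ := A.image (fun a => x - a) with hB
  have hcardB : B.card = A.card := by
    exact Finset.card_image_of_injective _ sub_right_injective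
  have hBsub : B ⊆ Finset.Icc (x - k) x := by
    intro b hb
    simp only [hB, Finset.mem_image] at hb
    obtain ⟨a, ha, rfl⟩ := hb
    have := hA ha
    simp only [Finset.mem_Icc] at this ⊢
    omega
  -- A ∩ B is nonempty
  have hinter : (A ∩ B).Nonempty := by
    by_contra hempty
    rw [Finset.not_nonempty_iff_eq_empty] at hempty
    have hdisj : Disjoint A B := Finset.disjoint_iff_inter_eq_empty.mpr hempty
    set L : ℤ := min 0 (x - k) with hL
    set U : ℤ := max k x with hU
    have hsub : A ∪ B ⊆ Finset.Icc L U := by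
      intro y hy
      rcases Finset.mem_union.mp hy with h | h
      · have := hA h; simp only [Finset.mem_Icc] at this ⊢; omega
      · have := hBsub h; simp only [Finset.mem_Icc] at this ⊢; omega
    have hcard := Finset.card_le_card hsub
    rw [Finset.card_union_of_disjoint hdisj, hcardB] at hcard
    rw [Int.card_Icc] at hcard
    have hLU : L ≤ U := by omega
    have : (A.card : ℤ) + (A.card : ℤ) ≤ U + 1 - L := by
      have := Int.toNat_of_nonneg (a := U + 1 - L) (by omega)
      omega
    omega
  obtain ⟨a, ha⟩ := hinter
  have haA : a ∈ A := (Finset.mem_inter.mp ha).1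
  have haB : a ∈ B := (Finset.mem_inter.mp ha).2
  simp only [hB, Finset.mem_image] at haB
  obtain ⟨b, hbA, hab⟩ := haB
  have : x = a + b := by omega
  rw [this]
  exact Finset.add_mem_add haA hbA
end

section
/- Let n be a positive integer and let A be a sum-free subset of [n] = {1,...,n} with A containing an even number and |A| ≥ (2/5 - η)n for some real η with 1/n ≤ η ≤ 1/175². Then the greatest common divisor d(A) of the differences of elements of A equals 1. -/
open Pointwise

theorem large_sumfree_with_even_gcd_one (n : ℕ) (hn : 0 < n) (A : Finset ℤ)
    (hAsub : A ⊆ Finset.Icc 1 (n : ℤ))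
    (hsf : ∀ x ∈ A, ∀ y ∈ A, ∀ z ∈ A, x + y ≠ z)
    (heven : ∃ a ∈ A, Even a)
    (η : ℝ) (hη1 : 1 / (n : ℝ) ≤ η) (hη2 : η ≤ 1 / 175 ^ 2)
    (hcard : (2 / 5 - η) * (n : ℝ) ≤ (A.card : ℝ)) :
    Finset.gcd (A - A) id = 1 := by
  have hnpos : (0:ℝ) < n := by exact_mod_cast hn
  have hn30625 : (30625 : ℕ) ≤ n := by
    by_contra h
    push_neg at h
    have h1 : (n:ℝ) < 30625 := by exact_mod_cast h
    have : (1:ℝ)/30625 < 1/n := by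
      apply one_div_lt_one_div_of_lt hnpos h1
    norm_num at hη2
    linarith
  have hnR : (30625:ℝ) ≤ n := by exact_mod_cast hn30625
  have hAcard : (2/5 - 1/30625) * (n:ℝ) ≤ (A.card : ℝ) := by
    norm_num at hη2
    nlinarith
  set g : ℤ := Finset.gcd (A - A) id with hgdef
  have hg0 : 0 ≤ g := by
    have := Finset.normalize_gcd (s := A - A) (f := (id : ℤ → ℤ))
    rw [← Int.abs_eq_normalize] at this
    rw [hgdef, ← this]
    exact abs_nonneg _
  have hdvd : ∀ x ∈ A, ∀ y ∈ A, g ∣ x - y := by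
    intro x hx y hy
    exact Finset.gcd_dvd (Finset.sub_mem_sub hx hy)
  by_contra hg1
  -- A is large, in particular nonempty
  have hbig : (12000 : ℝ) ≤ (A.card : ℝ) := by nlinarith
  have hcpos : 0 < A.card := by
    by_contra h
    push_neg at h
    have : A.card = 0 := Nat.le_zero.mp h
    rw [this] at hbig; norm_num at hbig
  have hAne : A.Nonempty := Finset.card_pos.mp hcpos
  have hgne0 : g ≠ 0 := by
    intro h0
    have hone : A.card ≤ 1 := Finset.card_le_one.mpr (fun x hx y hy => by
      have hd := hdvd x hx y hy
      rw [h0, zero_dvd_iff, sub_eq_zero] at hd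
      exact hd)
    have : (A.card : ℝ) ≤ 1 := by exact_mod_cast hone
    linarith
  -- setup min element
  set a₀ : ℤ := A.min' hAne with ha₀def
  have ha₀ : a₀ ∈ A := A.min'_mem hAne
  have ha₀1 : 1 ≤ a₀ := (Finset.mem_Icc.mp (hAsub ha₀)).1
  by_cases hg3 : 3 ≤ g
  · -- g ≥ 3 : too few residues
    have hmem : ∀ x ∈ A, (x - a₀) / g ∈ Finset.Icc (0:ℤ) (((n:ℤ) - 1) / 3) := by
      intro x hx
      obtain ⟨hx1, hxn⟩ := Finset.mem_Icc.mp (hAsub hx)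
      have hle : a₀ ≤ x := A.min'_le x hx
      have hd : g ∣ x - a₀ := hdvd x hx a₀ ha₀
      have hq : (x - a₀) / g * g = x - a₀ := Int.ediv_mul_cancel hd
      have hq0 : 0 ≤ (x - a₀) / g := Int.ediv_nonneg (by linarith) (by linarith)
      rw [Finset.mem_Icc]
      refine ⟨hq0, ?_⟩
      rw [Int.le_ediv_iff_mul_le (by norm_num : (0:ℤ) < 3)]
      nlinarith
    have hinj : Set.InjOn (fun x => (x - a₀) / g) A := by
      intro x hx y hy hxy
      simp only at hxy
      have hdx : g ∣ x - a₀ := hdvd x hx a₀ ha₀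
      have hdy : g ∣ y - a₀ := hdvd y hy a₀ ha₀
      have h1 : (x - a₀) / g * g = x - a₀ := Int.ediv_mul_cancel hdx
      have h2 : (y - a₀) / g * g = y - a₀ := Int.ediv_mul_cancel hdy
      rw [hxy] at h1
      linarith [h1, h2]
    have hcle : A.card ≤ (Finset.Icc (0:ℤ) (((n:ℤ) - 1) / 3)).card :=
      Finset.card_le_card_of_injOn _ hmem hinj
    rw [Int.card_Icc] at hcle
    have hnn : (0:ℤ) ≤ ((n:ℤ) - 1) / 3 + 1 - 0 := by
      have h0 : (0:ℤ) < (n:ℤ) := by exact_mod_cast hn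
      have : (0:ℤ) ≤ ((n:ℤ) - 1) / 3 := Int.ediv_nonneg (by omega) (by norm_num)
      omega
    have hcleZ : (A.card : ℤ) ≤ ((n:ℤ) - 1) / 3 + 1 - 0 := (Int.le_toNat hnn).mp hcle
    have h3 : 3 * (A.card : ℤ) ≤ (n:ℤ) + 2 := by omega
    have h3R : 3 * (A.card : ℝ) ≤ (n:ℝ) + 2 := by exact_mod_cast h3
    nlinarith
  · -- g = 2 : all elements even
    have hg2 : g = 2 := by omega
    obtain ⟨e, he, heE⟩ := heven
    have hallE : ∀ x ∈ A, x % 2 = 0 := by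
      intro x hx
      have hd := hdvd x hx e he
      rw [hg2] at hd
      have heE' : e % 2 = 0 := Int.even_iff.mp heE
      omega
    set a : ℤ := A.max' hAne with hadef
    have ha : a ∈ A := A.max'_mem hAne
    obtain ⟨ha1, han⟩ := Finset.mem_Icc.mp (hAsub ha)
    set S : Finset ℤ := A.erase a with hSdef
    set T : Finset ℤ := S.image (fun x => a - x) with hTdef
    set E : Finset ℤ := (Finset.Icc 1 (n:ℤ)).filter (fun x => x % 2 = 0) with hEdef
    have hTcard : T.card = S.card :=
      Finset.card_image_of_injOn (fun x _ y _ h => by omega)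
    have hScard : S.card = A.card - 1 := Finset.card_erase_of_mem ha
    have hSsub : S ⊆ E := by
      intro x hx
      have hxA : x ∈ A := Finset.mem_of_mem_erase hx
      rw [hEdef, Finset.mem_filter]
      exact ⟨hAsub hxA, hallE x hxA⟩
    have hTsub : T ⊆ E := by
      intro y hy
      rw [hTdef, Finset.mem_image] at hy
      obtain ⟨x, hxS, hxy⟩ := hy
      have hxA : x ∈ A := Finset.mem_of_mem_erase hxS
      have hxne : x ≠ a := Finset.ne_of_mem_erase hxS
      obtain ⟨hx1, hxn⟩ := Finset.mem_Icc.mp (hAsub hxA)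
      have hxa : x ≤ a := A.le_max' x hxA
      have hE1 : x % 2 = 0 := hallE x hxA
      have hE2 : a % 2 = 0 := hallE a ha
      rw [hEdef, Finset.mem_filter, Finset.mem_Icc, ← hxy]
      constructor
      · constructor
        · have : x < a := lt_of_le_of_ne hxa hxne
          omega
        · omega
      · omega
    have hdisj : Disjoint S T := by
      rw [Finset.disjoint_left]
      intro y hyS hyT
      rw [hTdef, Finset.mem_image] at hyT
      obtain ⟨x, hxS, hxy⟩ := hyT
      have hxA : x ∈ A := Finset.mem_of_mem_erase hxS
      have hyA : y ∈ A := Finset.mem_of_mem_erase hyS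
      exact hsf x hxA y hyA a ha (by omega)
    have hunion : S.card + T.card ≤ E.card := by
      rw [← Finset.card_union_of_disjoint hdisj]
      exact Finset.card_le_card (Finset.union_subset hSsub hTsub)
    have hEcard : E.card ≤ (Finset.Icc (1:ℤ) ((n:ℤ)/2)).card := by
      apply Finset.card_le_card_of_injOn (fun x => x / 2)
      · intro x hx
        rw [hEdef, Finset.mem_coe, Finset.mem_filter, Finset.mem_Icc] at hx
        simp only [Finset.mem_coe, Finset.mem_Icc]
        omega
      · intro x hx y hy hxy
        have hx' : x ∈ E := hx
        have hy' : y ∈ E := hy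
        rw [hEdef, Finset.mem_filter, Finset.mem_Icc] at hx' hy'
        change x / 2 = y / 2 at hxy
        omega
    rw [Int.card_Icc] at hEcard
    have hfin : 2 * (A.card : ℤ) - 2 ≤ (((n:ℤ)/2 + 1 - 1).toNat : ℤ) := by
      have h1 : (S.card : ℤ) = (A.card : ℤ) - 1 := by
        rw [hScard]; push_cast [hcpos]; omega
      have := hunion.trans hEcard
      omega
    have hfinZ : 4 * (A.card : ℤ) ≤ (n:ℤ) + 4 := by omega
    have hfinR : 4 * (A.card : ℝ) ≤ (n:ℝ) + 4 := by exact_mod_cast hfinZ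
    nlinarith
end

section
/- Let C₁ be a sum-free subset of [n] with elements c₁ < c₂ < ... < c_k, let C̃₂ be a sum-free subset of [n] disjoint from C₁, and let R = [n] \ (C₁ ∪ C̃₂). If D = {c₂ - c₁, ..., c_k - c₁}, then |D ∩ C̃₂| ≤ |R| + 1. -/
theorem diff_inter_second_sumfree (n : ℕ) (C₁ C₂ : Finset ℕ)
    (h1 : C₁ ⊆ Finset.Icc 1 n) (h2 : C₂ ⊆ Finset.Icc 1 n)
    (hne : C₁.Nonempty)
    (hsf1 : ∀ x ∈ C₁, ∀ y ∈ C₁, ∀ z ∈ C₁, x + y ≠ z)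
    (hsf2 : ∀ x ∈ C₂, ∀ y ∈ C₂, ∀ z ∈ C₂, x + y ≠ z)
    (hdisj : Disjoint C₁ C₂)
    (R : Finset ℕ) (hR : R = Finset.Icc 1 n \ (C₁ ∪ C₂))
    (D : Finset ℕ) (hD : D = (C₁.erase (C₁.min' hne)).image (fun c => c - C₁.min' hne)) :
    (D ∩ C₂).card ≤ R.card + 1 := by
  set m := C₁.min' hne with hm
  set S := D ∩ C₂ with hSdef
  by_cases hS : S.Nonempty
  · have hDmem : ∀ d ∈ D, ∃ c ∈ C₁, m < c ∧ d = c - m := by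
      intro d hd
      rw [hD] at hd
      obtain ⟨c, hc, hcd⟩ := Finset.mem_image.mp hd
      have hcC : c ∈ C₁ := Finset.mem_of_mem_erase hc
      have hcm : c ≠ m := Finset.ne_of_mem_erase hc
      have : m ≤ c := Finset.min'_le _ _ hcC
      exact ⟨c, hcC, lt_of_le_of_ne this (Ne.symm hcm), hcd.symm⟩
    set M := S.max' hS with hM
    have hMS : M ∈ S := S.max'_mem hS
    have hMD : M ∈ D := (Finset.mem_inter.mp hMS).1
    have hMC₂ : M ∈ C₂ := (Finset.mem_inter.mp hMS).2
    have hMn : M ≤ n := (Finset.mem_Icc.mp (h2 hMC₂)).2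
    obtain ⟨C, hCC, hmC, hMeq⟩ := hDmem M hMD
    have key : ∀ s ∈ S.erase M, M - s ∈ R := by
      intro s hs
      have hsM : s ≠ M := Finset.ne_of_mem_erase hs
      have hsS : s ∈ S := Finset.mem_of_mem_erase hs
      have hsD : s ∈ D := (Finset.mem_inter.mp hsS).1
      have hsC₂ : s ∈ C₂ := (Finset.mem_inter.mp hsS).2
      have hsle : s ≤ M := Finset.le_max' _ _ hsS
      have hslt : s < M := lt_of_le_of_ne hsle hsM
      obtain ⟨c, hcC, hmc, hseq⟩ := hDmem s hsD
      rw [hR]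
      rw [Finset.mem_sdiff, Finset.mem_Icc, Finset.mem_union]
      refine ⟨⟨by omega, by omega⟩, ?_⟩
      push_neg
      constructor
      · intro hx
        have hclt : c < C := by omega
        have := hsf1 c hcC (M - s) hx C hCC
        omega
      · intro hx
        have := hsf2 s hsC₂ (M - s) hx M hMC₂
        omega
    have hinj : Set.InjOn (fun s => M - s) ↑(S.erase M) := by
      intro a ha b hb hab
      simp only at hab
      have haM : a ≤ M := Finset.le_max' _ _ (Finset.mem_of_mem_erase ha)
      have hbM : b ≤ M := Finset.le_max' _ _ (Finset.mem_of_mem_erase hb)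
      omega
    have hcard : (S.erase M).card ≤ R.card :=
      Finset.card_le_card_of_injOn _ key hinj
    have := Finset.card_erase_of_mem hMS
    have hpos : 1 ≤ S.card := Finset.card_pos.mpr hS
    omega
  · rw [Finset.not_nonempty_iff_eq_empty] at hS
    have h0 : S = ∅ := hS
    rw [h0]
    simp
end

section
/- For positive integers k and ℓ, the number p*_ℓ(k) of partitions of k into ℓ distinct positive parts satisfies p*_ℓ(k) ≤ (e²k/ℓ²)^ℓ. -/
open Finset

-- partial sum function
def psum (ℓ : ℕ) (f : Fin ℓ → ℕ) (m : ℕ) : ℕ :=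
  ∑ i ∈ Finset.univ.filter (fun i : Fin ℓ => (i : ℕ) < m), f i

lemma psum_zero (ℓ : ℕ) (f : Fin ℓ → ℕ) : psum ℓ f 0 = 0 := by
  simp [psum]

lemma psum_top (ℓ : ℕ) (f : Fin ℓ → ℕ) : psum ℓ f ℓ = ∑ i, f i := by
  unfold psum
  congr 1
  ext i
  simp [i.isLt]

lemma psum_succ (ℓ : ℕ) (f : Fin ℓ → ℕ) {m : ℕ} (hm : m < ℓ) :
    psum ℓ f (m + 1) = psum ℓ f m + f ⟨m, hm⟩ := by
  unfold psum
  rw [show Finset.univ.filter (fun i : Fin ℓ => (i : ℕ) < m + 1)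
      = insert ⟨m, hm⟩ (Finset.univ.filter (fun i : Fin ℓ => (i : ℕ) < m)) by
    ext i
    simp only [mem_filter, mem_insert, mem_univ, true_and, Fin.ext_iff]
    omega]
  rw [Finset.sum_insert (by simp)]
  ring

lemma psum_strict (ℓ : ℕ) (f : Fin ℓ → ℕ) (hf : ∀ i, 0 < f i) {m m' : ℕ}
    (h : m < m') (h' : m' ≤ ℓ) : psum ℓ f m < psum ℓ f m' := by
  have hm : m < ℓ := lt_of_lt_of_le h h'
  apply Finset.sum_lt_sum_of_subset (i := (⟨m, hm⟩ : Fin ℓ))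
  · intro i hi
    simp only [mem_filter, mem_univ, true_and] at hi ⊢
    omega
  · simp [h]
  · simp
  · exact hf _
  · intro j _ _; exact Nat.zero_le _

lemma comp_card_le (k ℓ : ℕ) (hℓ : 0 < ℓ) :
    ((Finset.Nat.antidiagonalTuple ℓ k).filter (fun f => ∀ i, 0 < f i)).card
      ≤ (k - 1).choose (ℓ - 1) := by
  classical
  have := Finset.card_le_card_of_injOn
    (f := fun f : Fin ℓ → ℕ => Finset.image (fun j : Fin (ℓ-1) => psum ℓ f ((j : ℕ)+1)) Finset.univ)
    (s := (Finset.Nat.antidiagonalTuple ℓ k).filter (fun f => ∀ i, 0 < f i))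
    (t := Finset.powersetCard (ℓ-1) (Finset.Ioo 0 k))
    ?_ ?_
  · rwa [Finset.card_powersetCard, Nat.card_Ioo] at this
  · -- maps to
    intro f hf
    simp only [Finset.mem_coe, Finset.mem_filter, Finset.Nat.mem_antidiagonalTuple] at hf
    obtain ⟨hsum, hpos⟩ := hf
    have hstrict : StrictMono (fun j : Fin (ℓ-1) => psum ℓ f ((j : ℕ)+1)) := by
      intro a b hab
      have hb := b.isLt
      have hab' : (a:ℕ) < (b:ℕ) := hab
      exact psum_strict ℓ f hpos (by omega) (by omega)
    rw [Finset.mem_coe, Finset.mem_powersetCard]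
    constructor
    · intro x hx
      simp only [Finset.mem_image, Finset.mem_univ, true_and] at hx
      obtain ⟨j, rfl⟩ := hx
      have hj := j.isLt
      rw [Finset.mem_Ioo]
      constructor
      · have := psum_strict ℓ f hpos (m := 0) (m' := (j:ℕ)+1) (Nat.succ_pos _) (by omega)
        rw [psum_zero] at this
        omega
      · have := psum_strict ℓ f hpos (show (j:ℕ)+1 < ℓ by omega) le_rfl
        rw [psum_top, hsum] at this
        omega
    · rw [Finset.card_image_of_injective _ hstrict.injective, Finset.card_univ,
        Fintype.card_fin]
  · -- injOn
    intro f hf g hg hfg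
    simp only [Finset.mem_coe, Finset.mem_filter, Finset.Nat.mem_antidiagonalTuple] at hf hg
    obtain ⟨hfsum, hfpos⟩ := hf
    obtain ⟨hgsum, hgpos⟩ := hg
    have hfs : StrictMono (fun j : Fin (ℓ-1) => psum ℓ f ((j : ℕ)+1)) := by
      intro a b hab
      have hb := b.isLt
      have hab' : (a:ℕ) < (b:ℕ) := hab
      exact psum_strict ℓ f hfpos (by omega) (by omega)
    have hgs : StrictMono (fun j : Fin (ℓ-1) => psum ℓ g ((j : ℕ)+1)) := by
      intro a b hab
      have hb := b.isLt
      have hab' : (a:ℕ) < (b:ℕ) := hab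
      exact psum_strict ℓ g hgpos (by omega) (by omega)
    set T := Finset.image (fun j : Fin (ℓ-1) => psum ℓ f ((j : ℕ)+1)) Finset.univ with hT
    have hcard : T.card = ℓ - 1 := by
      rw [hT, Finset.card_image_of_injective _ hfs.injective, Finset.card_univ,
        Fintype.card_fin]
    have e1 : (fun j : Fin (ℓ-1) => psum ℓ f ((j : ℕ)+1)) = T.orderEmbOfFin hcard :=
      Finset.orderEmbOfFin_unique hcard
        (fun j => by rw [hT]; exact Finset.mem_image_of_mem _ (Finset.mem_univ j)) hfs
    have hfg2 : Finset.image (fun j : Fin (ℓ-1) => psum ℓ g ((j : ℕ)+1)) Finset.univ = T := by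
      rw [hT]; exact hfg.symm
    have e2 : (fun j : Fin (ℓ-1) => psum ℓ g ((j : ℕ)+1)) = T.orderEmbOfFin hcard :=
      Finset.orderEmbOfFin_unique hcard
        (fun j => by rw [← hfg2]; exact Finset.mem_image_of_mem _ (Finset.mem_univ j)) hgs
    have hps : ∀ m, m ≤ ℓ → psum ℓ f m = psum ℓ g m := by
      intro m hm
      rcases Nat.eq_zero_or_pos m with rfl | hm0
      · rw [psum_zero, psum_zero]
      rcases eq_or_lt_of_le hm with rfl | hmlt
      · rw [psum_top, psum_top, hfsum, hgsum]
      · have hj : m - 1 < ℓ - 1 := by omega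
        have := congrFun (e1.trans e2.symm) ⟨m - 1, hj⟩
        simpa [Nat.sub_add_cancel hm0] using this
    funext i
    have h1 := psum_succ ℓ f i.isLt
    have h2 := psum_succ ℓ g i.isLt
    have e3 := hps i i.isLt.le
    have e4 := hps (i + 1) i.isLt
    simp only [Fin.eta] at h1 h2
    omega

lemma sum_emb {ℓ : ℕ} (S : Finset ℕ) (h : S.card = ℓ) :
    ∑ i : Fin ℓ, (S.orderEmbOfFin h i : ℕ) = S.sum id := by
  have himg : Finset.image (S.orderEmbOfFin h) Finset.univ = S := by
    apply Finset.coe_injective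
    rw [Finset.coe_image, Finset.coe_univ, Set.image_univ, Finset.range_orderEmbOfFin]
  conv_rhs => rw [← himg]
  rw [Finset.sum_image (fun x _ y _ hxy => (S.orderEmbOfFin h).injective hxy)]
  rfl

lemma card_mul_factorial_le (k ℓ : ℕ) :
    (((Finset.range (k + 1)).powerset).filter
        (fun S => S.card = ℓ ∧ (∀ a ∈ S, 0 < a) ∧ S.sum id = k)).card * Nat.factorial ℓ
      ≤ ((Finset.Nat.antidiagonalTuple ℓ k).filter (fun f => ∀ i, 0 < f i)).card := by
  classical
  set A := ((Finset.range (k + 1)).powerset).filter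
      (fun S => S.card = ℓ ∧ (∀ a ∈ S, 0 < a) ∧ S.sum id = k) with hA
  have hcard : (A ×ˢ (Finset.univ : Finset (Equiv.Perm (Fin ℓ)))).card
      = A.card * Nat.factorial ℓ := by
    rw [Finset.card_product, Finset.card_univ, Fintype.card_perm, Fintype.card_fin]
  rw [← hcard]
  apply Finset.card_le_card_of_injOn
    (f := fun p : Finset ℕ × Equiv.Perm (Fin ℓ) =>
      if h : p.1.card = ℓ then (fun i => (p.1.orderEmbOfFin h (p.2 i) : ℕ)) else fun _ => 0)
  · rintro ⟨S, σ⟩ hp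
    simp only [Finset.mem_coe, Finset.mem_product, hA, Finset.mem_filter, Finset.mem_powerset] at hp
    obtain ⟨⟨hsub, hScard, hSpos, hSsum⟩, -⟩ := hp
    simp only [Finset.mem_coe, dif_pos hScard]
    simp only [Finset.mem_coe, Finset.mem_filter, Finset.Nat.mem_antidiagonalTuple]
    constructor
    · rw [Equiv.sum_comp σ (fun i => (S.orderEmbOfFin hScard i : ℕ)), sum_emb S hScard, hSsum]
    · intro i
      exact hSpos _ (Finset.orderEmbOfFin_mem S hScard (σ i))
  · rintro ⟨S, σ⟩ hp ⟨S', σ'⟩ hp' heq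
    simp only [Finset.mem_coe, Finset.mem_product, hA, Finset.mem_filter,
      Finset.mem_powerset] at hp hp'
    obtain ⟨⟨hsub, hScard, hSpos, hSsum⟩, -⟩ := hp
    obtain ⟨⟨hsub', hScard', hSpos', hSsum'⟩, -⟩ := hp'
    have heq2 : (fun i => (S.orderEmbOfFin hScard (σ i) : ℕ))
        = fun i => (S'.orderEmbOfFin hScard' (σ' i) : ℕ) := by
      simpa only [dif_pos hScard, dif_pos hScard'] using heq
    have himgσ : ∀ (T : Finset ℕ) (h : T.card = ℓ) (τ : Equiv.Perm (Fin ℓ)),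
        Finset.image (fun i => (T.orderEmbOfFin h (τ i) : ℕ)) Finset.univ = T := by
      intro T h τ
      have himg : Finset.image (T.orderEmbOfFin h) Finset.univ = T := by
        apply Finset.coe_injective
        rw [Finset.coe_image, Finset.coe_univ, Set.image_univ, Finset.range_orderEmbOfFin]
      have hh : Finset.image (fun i => (T.orderEmbOfFin h (τ i) : ℕ)) Finset.univ
          = Finset.image (T.orderEmbOfFin h) Finset.univ := by
        ext x
        simp only [Finset.mem_image, Finset.mem_univ, true_and]
        constructor
        · rintro ⟨i, rfl⟩; exact ⟨τ i, rfl⟩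
        · rintro ⟨i, rfl⟩; exact ⟨τ.symm i, by simp⟩
      rw [hh, himg]
    have hSS : S = S' := by
      rw [← himgσ S hScard σ, ← himgσ S' hScard' σ', heq2]
    subst hSS
    have hσ : σ = σ' := by
      ext i
      have h := congrFun heq2 i
      have h2 := (S.orderEmbOfFin hScard).injective h
      rw [h2]
    rw [hσ]

lemma pow_le_exp_mul_factorial (n : ℕ) :
    (n : ℝ) ^ n ≤ Real.exp 1 ^ n * (Nat.factorial n : ℝ) := by
  have h1 : (n : ℝ) ^ n / (Nat.factorial n : ℝ) ≤ Real.exp n := by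
    have h2 := Real.sum_le_exp_of_nonneg (x := (n : ℝ)) (Nat.cast_nonneg n) (n + 1)
    refine le_trans ?_ h2
    apply Finset.single_le_sum (f := fun i => (n : ℝ) ^ i / (Nat.factorial i : ℝ))
      (fun i _ => by positivity) (Finset.self_mem_range_succ n)
  have h3 : Real.exp n = Real.exp 1 ^ n := by
    rw [← Real.exp_nat_mul, mul_one]
  have hfac : (0 : ℝ) < (Nat.factorial n : ℝ) := by
    exact_mod_cast Nat.factorial_pos n
  rw [div_le_iff₀ hfac] at h1
  rw [h3] at h1
  exact h1

theorem restricted_partitions_bound (k ℓ : ℕ) (hk : 0 < k) (hℓ : 0 < ℓ) :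
    ((((Finset.range (k + 1)).powerset).filter
        (fun S => S.card = ℓ ∧ (∀ a ∈ S, 0 < a) ∧ S.sum id = k)).card : ℝ)
      ≤ (Real.exp 1 ^ 2 * (k : ℝ) / (ℓ : ℝ) ^ 2) ^ ℓ := by
  classical
  set N := (((Finset.range (k + 1)).powerset).filter
      (fun S => S.card = ℓ ∧ (∀ a ∈ S, 0 < a) ∧ S.sum id = k)).card with hN
  have key : N * Nat.factorial ℓ ≤ (k - 1).choose (ℓ - 1) :=
    le_trans (card_mul_factorial_le k ℓ) (comp_card_le k ℓ hℓ)
  rcases lt_or_ge k ℓ with hkl | hkl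
  · -- k < ℓ : count is zero
    have hz : (k - 1).choose (ℓ - 1) = 0 := Nat.choose_eq_zero_of_lt (by omega)
    have : N = 0 := by
      have := key
      rw [hz, Nat.le_zero, Nat.mul_eq_zero] at this
      rcases this with h | h
      · exact h
      · exact absurd h (Nat.factorial_pos ℓ).ne'
    rw [this]
    push_cast
    positivity
  · -- ℓ ≤ k
    have hnat : N * (Nat.factorial ℓ * Nat.factorial (ℓ - 1)) ≤ k ^ (ℓ - 1) := by
      calc N * (Nat.factorial ℓ * Nat.factorial (ℓ - 1))
          = (N * Nat.factorial ℓ) * Nat.factorial (ℓ - 1) := by ring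
        _ ≤ (k - 1).choose (ℓ - 1) * Nat.factorial (ℓ - 1) := by
            exact Nat.mul_le_mul_right _ key
        _ = (k - 1).descFactorial (ℓ - 1) := by
            rw [Nat.descFactorial_eq_factorial_mul_choose]; ring
        _ ≤ (k - 1) ^ (ℓ - 1) := Nat.descFactorial_le_pow _ _
        _ ≤ k ^ (ℓ - 1) := Nat.pow_le_pow_left (Nat.sub_le _ _) _
    have h1 : (N : ℝ) * ((Nat.factorial ℓ : ℝ) * (Nat.factorial (ℓ - 1) : ℝ)) ≤ (k : ℝ) ^ (ℓ - 1) := by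
      exact_mod_cast hnat
    have h2 := pow_le_exp_mul_factorial ℓ
    set E := Real.exp 1 with hE
    have hE0 : (0 : ℝ) < E := Real.exp_pos 1
    have hℓ0 : (0 : ℝ) < (ℓ : ℝ) := by exact_mod_cast hℓ
    have hk0 : (0 : ℝ) < (k : ℝ) := by exact_mod_cast hk
    have hfac : (Nat.factorial ℓ : ℝ) = (ℓ : ℝ) * (Nat.factorial (ℓ - 1) : ℝ) := by
      rw [← Nat.cast_mul]
      exact_mod_cast (congrArg (Nat.cast (R := ℝ)) (Nat.mul_factorial_pred hℓ.ne')).symm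
    have hrhs : (E ^ 2 * (k : ℝ) / (ℓ : ℝ) ^ 2) ^ ℓ
        = (E ^ 2 * (k : ℝ)) ^ ℓ / ((ℓ : ℝ) ^ 2) ^ ℓ := div_pow _ _ _
    rw [hrhs, le_div_iff₀ (by positivity)]
    have hN0 : (0 : ℝ) ≤ (N : ℝ) := Nat.cast_nonneg _
    have hfpos : (0 : ℝ) < (Nat.factorial (ℓ - 1) : ℝ) := by
      exact_mod_cast Nat.factorial_pos (ℓ - 1)
    calc (N : ℝ) * ((ℓ : ℝ) ^ 2) ^ ℓ
        = (N : ℝ) * ((ℓ : ℝ) ^ ℓ * (ℓ : ℝ) ^ ℓ) := by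
          rw [← pow_mul, ← pow_add]; ring_nf
      _ ≤ (N : ℝ) * ((E ^ ℓ * (Nat.factorial ℓ : ℝ)) * (E ^ ℓ * (Nat.factorial ℓ : ℝ))) := by
          apply mul_le_mul_of_nonneg_left _ hN0
          apply mul_le_mul h2 h2 (by positivity) (by positivity)
      _ = (E ^ ℓ * E ^ ℓ) * (((N : ℝ) * ((Nat.factorial ℓ : ℝ) * (Nat.factorial (ℓ - 1) : ℝ))) * (ℓ : ℝ)) := by
          nth_rewrite 2 [hfac]
          ring
      _ ≤ (E ^ ℓ * E ^ ℓ) * ((k : ℝ) ^ (ℓ - 1) * (k : ℝ)) := by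
          apply mul_le_mul_of_nonneg_left _ (by positivity)
          apply mul_le_mul h1 (by exact_mod_cast Nat.cast_le.mpr hkl) hℓ0.le (by positivity)
      _ = (E ^ 2 * (k : ℝ)) ^ ℓ := by
          rw [mul_pow, ← pow_mul, ← pow_succ, Nat.sub_add_cancel hℓ]
          ring_nf
end

section
/- Let y ≥ 4x be positive integers and A = {0, y, 2y} + [0, x-1] = {iy + j : i ∈ {0,1,2}, 0 ≤ j ≤ x-1}. Then |A| = 3x and |A - A| = 10x - 5. -/
open Pointwise

lemma sing_add_Icc (c a b : ℤ) :
    ({c} : Finset ℤ) + Finset.Icc a b = Finset.Icc (c + a) (c + b) := by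
  rw [Finset.singleton_add, ← Finset.image_add_left_Icc]
  rfl

theorem three_blocks_example (x y : ℤ) (hx : 1 ≤ x) (hy : 4 * x ≤ y)
    (A : Finset ℤ) (hA : A = ({0, y, 2 * y} : Finset ℤ) + Finset.Icc 0 (x - 1)) :
    (A.card : ℤ) = 3 * x ∧ (((A - A).card : ℤ)) = 10 * x - 5 := by
  have hc : ∀ a b : ℤ, a ≤ b + 1 → ((Finset.Icc a b).card : ℤ) = b + 1 - a := by
    intro a b h
    rw [Int.card_Icc]
    omega
  have hA3 : A = Finset.Icc 0 (x - 1) ∪ Finset.Icc y (y + (x - 1)) ∪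
      Finset.Icc (2 * y) (2 * y + (x - 1)) := by
    rw [hA, show ({0, y, 2 * y} : Finset ℤ) = {0} ∪ ({y} ∪ {2 * y}) from rfl,
      Finset.union_add, Finset.union_add, sing_add_Icc, sing_add_Icc, sing_add_Icc]
    norm_num [Finset.union_assoc]
  have memA : ∀ c ∈ ({0, y, 2 * y} : Finset ℤ), ∀ s : ℤ, 0 ≤ s → s ≤ x - 1 → c + s ∈ A := by
    intro c hcmem s hs1 hs2
    rw [hA]
    exact Finset.add_mem_add hcmem (Finset.mem_Icc.2 ⟨hs1, hs2⟩)
  have hsub : A - A = Finset.Icc (-(2 * y) - (x - 1)) (-(2 * y) + (x - 1)) ∪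
      Finset.Icc (-y - (x - 1)) (-y + (x - 1)) ∪
      Finset.Icc (-(x - 1)) (x - 1) ∪
      Finset.Icc (y - (x - 1)) (y + (x - 1)) ∪
      Finset.Icc (2 * y - (x - 1)) (2 * y + (x - 1)) := by
    ext z
    constructor
    · intro h
      obtain ⟨a, ha, b, hb, hab⟩ := Finset.mem_sub.1 h
      rw [hA3] at ha hb
      simp only [Finset.mem_union, Finset.mem_Icc] at ha hb ⊢
      omega
    · intro h
      simp only [Finset.mem_union, Finset.mem_Icc] at h
      rcases h with (((h | h) | h) | h) | h
      · exact Finset.mem_sub.2 ⟨0 + max 0 (z + 2 * y), memA 0 (by simp) _ (by omega) (by omega),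
          2 * y + (max 0 (z + 2 * y) - (z + 2 * y)), memA (2 * y) (by simp) _ (by omega) (by omega),
          by omega⟩
      · exact Finset.mem_sub.2 ⟨0 + max 0 (z + y), memA 0 (by simp) _ (by omega) (by omega),
          y + (max 0 (z + y) - (z + y)), memA y (by simp) _ (by omega) (by omega),
          by omega⟩
      · exact Finset.mem_sub.2 ⟨0 + max 0 z, memA 0 (by simp) _ (by omega) (by omega),
          0 + (max 0 z - z), memA 0 (by simp) _ (by omega) (by omega),
          by omega⟩
      · exact Finset.mem_sub.2 ⟨y + max 0 (z - y), memA y (by simp) _ (by omega) (by omega),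
          0 + (max 0 (z - y) - (z - y)), memA 0 (by simp) _ (by omega) (by omega),
          by omega⟩
      · exact Finset.mem_sub.2 ⟨2 * y + max 0 (z - 2 * y), memA (2 * y) (by simp) _ (by omega) (by omega),
          0 + (max 0 (z - 2 * y) - (z - 2 * y)), memA 0 (by simp) _ (by omega) (by omega),
          by omega⟩
  constructor
  · rw [hA3, Finset.card_union_of_disjoint, Finset.card_union_of_disjoint]
    · push_cast
      rw [hc, hc, hc] <;> omega
    · rw [Finset.disjoint_left]
      intro a ha hb
      simp only [Finset.mem_Icc] at ha hb
      omega
    · rw [Finset.disjoint_left]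
      intro a ha hb
      simp only [Finset.mem_union, Finset.mem_Icc] at ha hb
      omega
  · rw [hsub, Finset.card_union_of_disjoint, Finset.card_union_of_disjoint,
      Finset.card_union_of_disjoint, Finset.card_union_of_disjoint]
    · push_cast
      rw [hc, hc, hc, hc, hc] <;> omega
    all_goals
      rw [Finset.disjoint_left]
      intro a ha hb
      simp only [Finset.mem_union, Finset.mem_Icc] at ha hb
      omega
end
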